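/- For all integers k, l ≥ 0, every element φ of the subgroup of B_∞ generated by σ_1, …, σ_{l−1} (a copy of the braid group B_l) and every element ψ of the subgroup generated by σ_1, …, σ_{k−1} (a copy of B_k) satisfy β_{k,l} · φ · ψ^{↑l} = ψ · φ^{↑k} · β_{k,l}. -/

import Mathlib

namespace BraidPaper

/-- Relations of the infinite Artin braid group `B_∞`.  The generator with index `n : ℕ`
represents the Artin generator `σ_{n+1}` (so generators are `σ_1, σ_2, …`). -/
def BraidRels : Set (FreeGroup ℕ) :=
  {r | (∃ i : ℕ, r = .of i * .of (i + 1) * .of i * (.of (i + 1) * .of i * .of (i + 1))⁻¹) ∨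
       (∃ i j : ℕ, i + 2 ≤ j ∧ r = .of i * .of j * (.of j * .of i)⁻¹)}

/-- The infinite Artin braid group `B_∞`, presented by generators `σ_1, σ_2, …` and the
braid and far-commutativity relations. -/
abbrev BInf : Type := PresentedGroup BraidRels

/-- The Artin generator `σ i` of `B_∞` (meaningful for `i ≥ 1`). -/
def σ (i : ℕ) : BInf := PresentedGroup.of (i - 1)

lemma rel_eq_one {r : FreeGroup ℕ} (hr : r ∈ BraidRels) : PresentedGroup.mk BraidRels r = 1 := by
  have : r ∈ Subgroup.normalClosure BraidRels := Subgroup.subset_normalClosure hr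
  exact (QuotientGroup.eq_one_iff r).mpr this

lemma gen_braid (i : ℕ) :
    (PresentedGroup.of i : BInf) * .of (i + 1) * .of i = .of (i + 1) * .of i * .of (i + 1) := by
  have h := rel_eq_one (Or.inl ⟨i, rfl⟩)
  rw [map_mul, map_mul, map_mul, map_inv, map_mul, map_mul, mul_inv_eq_one] at h
  exact h

lemma gen_comm {i j : ℕ} (hij : i + 2 ≤ j) :
    (PresentedGroup.of i : BInf) * .of j = .of j * .of i := by
  have h := rel_eq_one (Or.inr ⟨i, j, hij, rfl⟩)
  rw [map_mul, map_mul, map_inv, map_mul, mul_inv_eq_one] at h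
  exact h

/-- The shift endomorphism `↑ℓ : B_∞ → B_∞`, `σ_i ↦ σ_{i+ℓ}`. -/
def shift (l : ℕ) : BInf →* BInf :=
  PresentedGroup.toGroup (f := fun n => (PresentedGroup.of (n + l) : BInf)) (by
    rintro r (⟨i, rfl⟩ | ⟨i, j, hij, rfl⟩) <;>
      simp only [map_mul, map_inv, FreeGroup.lift_apply_of, mul_inv_eq_one]
    · have h1 : i + 1 + l = i + l + 1 := by omega
      rw [h1]; exact gen_braid (i + l)
    · exact gen_comm (by omega : (i + l) + 2 ≤ j + l))

/-- The ascending product `σ_i σ_{i+1} ⋯ σ_{i+l-1}` (of `l` factors). -/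
def asc (i l : ℕ) : BInf := ((List.range l).map fun t => σ (i + t)).prod

/-- The descending product `σ_i σ_{i-1} ⋯ σ_{i-k+1}` (of `k` factors). -/
def desc (i k : ℕ) : BInf := ((List.range k).map fun t => σ (i - t)).prod

/-- The block transposition braid
`β_{k,l} = (σ_k σ_{k+1} ⋯ σ_{k+l-1})(σ_{k-1} σ_k ⋯ σ_{k+l-2}) ⋯ (σ_1 σ_2 ⋯ σ_l)`,
with `β_{k,0} = β_{0,l} = 1`. -/
def β (k l : ℕ) : BInf := ((List.range k).map fun r => asc (k - r) l).prod

/-- The positive (Garside) lift `ω_a = β_{1,1} β_{2,1} ⋯ β_{a-1,1}` of the longest element of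
the symmetric group `S_a`, with `ω_0 = ω_1 = 1`. -/
def ω (a : ℕ) : BInf := ((List.range (a - 1)).map fun t => β (t + 1) 1).prod

/-- The copy of the braid group `B_n` inside `B_∞`: the subgroup generated by
`σ_1, …, σ_{n-1}`. -/
def BSub (n : ℕ) : Subgroup BInf := Subgroup.closure {g | ∃ i, 1 ≤ i ∧ i < n ∧ g = σ i}

lemma sigma_comm {i j : ℕ} (hi : 1 ≤ i) (h : i + 2 ≤ j) : σ i * σ j = σ j * σ i := by
  unfold σ
  exact gen_comm (by omega)

lemma sigma_braid {i : ℕ} (hi : 1 ≤ i) : σ i * σ (i + 1) * σ i = σ (i + 1) * σ i * σ (i + 1) := by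
  unfold σ
  have h : i + 1 - 1 = (i - 1) + 1 := by omega
  rw [h]
  exact gen_braid (i - 1)

lemma shift_sigma {i : ℕ} (hi : 1 ≤ i) (l : ℕ) : shift l (σ i) = σ (i + l) := by
  unfold σ shift
  rw [PresentedGroup.toGroup.of]
  congr 1
  omega

@[simp] lemma asc_zero (i : ℕ) : asc i 0 = 1 := by simp [asc]

lemma asc_succ (i l : ℕ) : asc i (l + 1) = asc i l * σ (i + l) := by
  simp [asc, List.range_succ]

lemma commute_sigma_asc {m i l : ℕ} (hm : 1 ≤ m) (hi : 1 ≤ i)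
    (h : m + 2 ≤ i ∨ i + l + 1 ≤ m) : Commute (σ m) (asc i l) := by
  induction l with
  | zero => simp
  | succ n ih =>
    rw [asc_succ]
    refine (ih (by omega)).mul_right ?_
    rcases h with h | h
    · exact sigma_comm hm (by omega)
    · exact (sigma_comm (by omega) (by omega)).symm

/-- Conjugation of an interior generator by an ascending run shifts its index up by one. -/
lemma asc_shift {j l t : ℕ} (hj : 1 ≤ j) (ht : t + 2 ≤ l) :
    asc j l * σ (j + t) = σ (j + t + 1) * asc j l := by
  induction l with
  | zero => omega
  | succ n ih =>
    rcases Nat.lt_or_ge (t + 2) (n + 1) with hlt | hge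
    · -- t + 2 ≤ n, use IH and commutation with the last factor
      have hcomm : σ (j + t) * σ (j + n) = σ (j + n) * σ (j + t) :=
        sigma_comm (by omega) (by omega)
      rw [asc_succ, mul_assoc, ← hcomm, ← mul_assoc, ih (by omega), mul_assoc]
    · -- t + 2 = n + 1, i.e. n = t + 1
      have hn : n = t + 1 := by omega
      subst hn
      rw [asc_succ, asc_succ]
      have h1 : j + (t + 1) = j + t + 1 := by omega
      have h2 : Commute (σ (j + t + 1)) (asc j t) :=
        commute_sigma_asc (by omega) hj (by omega)
      rw [h1]
      calc asc j t * σ (j + t) * σ (j + t + 1) * σ (j + t)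
          = asc j t * (σ (j + t) * σ (j + t + 1) * σ (j + t)) := by group
        _ = asc j t * (σ (j + t + 1) * σ (j + t) * σ (j + t + 1)) := by
            rw [sigma_braid (by omega : 1 ≤ j + t)]
        _ = asc j t * σ (j + t + 1) * (σ (j + t) * σ (j + t + 1)) := by group
        _ = σ (j + t + 1) * asc j t * (σ (j + t) * σ (j + t + 1)) := by rw [← h2.eq]
        _ = σ (j + t + 1) * (asc j t * σ (j + t) * σ (j + t + 1)) := by group

/-- Two consecutive descending-start ascending runs move `σ (a+l)` down to `σ a`. -/
lemma two_asc {a : ℕ} (ha : 1 ≤ a) (l : ℕ) :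
    asc (a + 1) l * asc a l * σ (a + l) = σ a * (asc (a + 1) l * asc a l) := by
  induction l with
  | zero => simp
  | succ n ih =>
    have hc : Commute (σ (a + n + 1)) (asc a n) :=
      commute_sigma_asc (by omega) ha (by omega)
    have h1 : a + 1 + n = a + n + 1 := by omega
    have h2 : a + (n + 1) = a + n + 1 := by omega
    calc asc (a + 1) (n + 1) * asc a (n + 1) * σ (a + (n + 1))
        = asc (a + 1) n * (σ (a + n + 1) * asc a n) * (σ (a + n) * σ (a + n + 1)) := by
          rw [asc_succ, asc_succ, h1, h2]; group
      _ = asc (a + 1) n * (asc a n * σ (a + n + 1)) * (σ (a + n) * σ (a + n + 1)) := by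
          rw [hc.eq]
      _ = asc (a + 1) n * asc a n * (σ (a + n + 1) * σ (a + n) * σ (a + n + 1)) := by group
      _ = asc (a + 1) n * asc a n * (σ (a + n) * σ (a + n + 1) * σ (a + n)) := by
          rw [← sigma_braid (by omega : 1 ≤ a + n)]
      _ = (asc (a + 1) n * asc a n * σ (a + n)) * (σ (a + n + 1) * σ (a + n)) := by group
      _ = σ a * (asc (a + 1) n * asc a n) * (σ (a + n + 1) * σ (a + n)) := by rw [ih]
      _ = σ a * (asc (a + 1) n * (σ (a + n + 1) * asc a n) * σ (a + n)) := by
          rw [hc.eq]; group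
      _ = σ a * (asc (a + 1) (n + 1) * asc a (n + 1)) := by
          rw [asc_succ, asc_succ, h1]; group

@[simp] lemma beta_zero (l : ℕ) : β 0 l = 1 := by simp [β]

lemma beta_succ (k l : ℕ) : β (k + 1) l = asc (k + 1) l * β k l := by
  unfold β
  rw [List.range_succ_eq_map, List.map_cons, List.prod_cons, List.map_map]
  simp only [Nat.sub_zero]
  refine congrArg (asc (k + 1) l * ·) (congrArg List.prod
    (List.map_congr_left fun r _ => ?_))
  show asc (k + 1 - (r + 1)) l = asc (k - r) l
  congr 1
  omega

lemma commute_sigma_beta {m k l : ℕ} (hm : k + l + 1 ≤ m) (hm1 : 1 ≤ m) :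
    Commute (σ m) (β k l) := by
  induction k with
  | zero => simp
  | succ n ih =>
    rw [beta_succ]
    exact (commute_sigma_asc hm1 (by omega) (by omega)).mul_right (ih (by omega))

lemma beta_A {k l i : ℕ} (hi : 1 ≤ i) (hil : i < l) :
    β k l * σ i = σ (i + k) * β k l := by
  induction k with
  | zero => simp
  | succ n ih =>
    rw [beta_succ, mul_assoc, ih]
    have h := asc_shift (j := n + 1) (l := l) (t := i - 1) (by omega) (by omega)
    have h1 : n + 1 + (i - 1) = i + n := by omega
    rw [h1] at h
    rw [← mul_assoc, h]
    have h2 : i + n + 1 = i + (n + 1) := by omega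
    rw [h2, mul_assoc]

lemma beta_B {k l i : ℕ} (hi : 1 ≤ i) (hik : i < k) :
    β k l * σ (l + i) = σ i * β k l := by
  induction k with
  | zero => omega
  | succ n ih =>
    rcases Nat.lt_or_ge i n with hlt | hge
    · rw [beta_succ, mul_assoc, ih hlt, ← mul_assoc, ← mul_assoc,
        ← (commute_sigma_asc hi (by omega) (Or.inl (by omega))).eq]
    · -- i = n, n ≥ 1
      have hn : i = n := by omega
      subst hn
      obtain ⟨j, rfl⟩ : ∃ j, i = j + 1 := ⟨i - 1, by omega⟩
      rw [beta_succ, beta_succ]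
      have hc : Commute (σ (l + (j + 1))) (β j l) :=
        commute_sigma_beta (by omega) (by omega)
      have h2 := two_asc (a := j + 1) (by omega) l
      have h3 : j + 1 + l = l + (j + 1) := by omega
      rw [h3] at h2
      have hc' : β j l * σ (l + (j + 1)) = σ (l + (j + 1)) * β j l := hc.symm.eq
      calc asc (j + 1 + 1) l * (asc (j + 1) l * β j l) * σ (l + (j + 1))
          = asc (j + 1 + 1) l * asc (j + 1) l * (β j l * σ (l + (j + 1))) := by group
        _ = asc (j + 1 + 1) l * asc (j + 1) l * (σ (l + (j + 1)) * β j l) := by rw [hc']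
        _ = asc (j + 1 + 1) l * asc (j + 1) l * σ (l + (j + 1)) * β j l := by group
        _ = σ (j + 1) * (asc (j + 1 + 1) l * asc (j + 1) l) * β j l := by rw [h2]
        _ = σ (j + 1) * (asc (j + 1 + 1) l * (asc (j + 1) l * β j l)) := by group

lemma conjA (k l : ℕ) (φ : BInf) (hφ : φ ∈ BSub l) :
    β k l * φ = shift k φ * β k l := by
  induction hφ using Subgroup.closure_induction with
  | mem x hx =>
    obtain ⟨i, hi1, hi2, rfl⟩ := hx
    rw [shift_sigma hi1, beta_A hi1 hi2]
  | one => simp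
  | mul x y hx hy hx' hy' =>
    rw [map_mul, ← mul_assoc, hx', mul_assoc, hy', ← mul_assoc]
  | inv x hx hx' =>
    rw [map_inv]
    calc β k l * x⁻¹ = (shift k x)⁻¹ * (shift k x * β k l) * x⁻¹ := by group
      _ = (shift k x)⁻¹ * (β k l * x) * x⁻¹ := by rw [hx']
      _ = (shift k x)⁻¹ * β k l := by group

lemma conjB (k l : ℕ) (ψ : BInf) (hψ : ψ ∈ BSub k) :
    β k l * shift l ψ = ψ * β k l := by
  induction hψ using Subgroup.closure_induction with
  | mem x hx =>
    obtain ⟨i, hi1, hi2, rfl⟩ := hx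
    rw [shift_sigma hi1]
    have h1 : i + l = l + i := by omega
    rw [h1, beta_B hi1 hi2]
  | one => simp
  | mul x y hx hy hx' hy' =>
    rw [map_mul, ← mul_assoc, hx', mul_assoc, hy', ← mul_assoc]
  | inv x hx hx' =>
    rw [map_inv]
    calc β k l * (shift l x)⁻¹
        = x⁻¹ * (x * β k l) * (shift l x)⁻¹ := by group
      _ = x⁻¹ * (β k l * shift l x) * (shift l x)⁻¹ := by rw [hx']
      _ = x⁻¹ * β k l := by group

lemma commAB (k l : ℕ) (φ ψ : BInf) (hφ : φ ∈ BSub l) (hψ : ψ ∈ BSub k) :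
    Commute ψ (shift k φ) := by
  induction hψ using Subgroup.closure_induction with
  | mem x hx =>
    obtain ⟨j, hj1, hj2, rfl⟩ := hx
    induction hφ using Subgroup.closure_induction with
    | mem y hy =>
      obtain ⟨i, hi1, hi2, rfl⟩ := hy
      rw [shift_sigma hi1]
      exact sigma_comm hj1 (by omega)
    | one => simp
    | mul a b ha hb ha' hb' => rw [map_mul]; exact ha'.mul_right hb'
    | inv a ha ha' => rw [map_inv]; exact ha'.inv_right
  | one => exact Commute.one_left _
  | mul a b ha hb ha' hb' => exact ha'.mul_left hb'
  | inv a ha ha' => exact ha'.inv_left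

/-- for `φ` in the copy of `B_l` and `ψ` in the copy of `B_k` inside `B_∞`,
`β_{k,l} · φ · ψ^{↑l} = ψ · φ^{↑k} · β_{k,l}`. -/
theorem beta_conjugation (k l : ℕ) (φ ψ : BInf) (hφ : φ ∈ BSub l) (hψ : ψ ∈ BSub k) :
    β k l * φ * shift l ψ = ψ * shift k φ * β k l := by
  have hA := conjA k l φ hφ
  have hB := conjB k l ψ hψ
  have hC := commAB k l φ ψ hφ hψ
  calc β k l * φ * shift l ψ = shift k φ * (β k l * shift l ψ) := by rw [hA]; group
    _ = shift k φ * ψ * β k l := by rw [hB]; group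
    _ = ψ * shift k φ * β k l := by rw [hC.eq]

end BraidPaper
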